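/- Let F be the free group on x₁, …, xₙ with Magnus expansion E : F → ℤ⟪X₁,…,Xₙ⟫ (E(xᵢ) = 1 + Xᵢ), let Nᵢ be the normal closure of xᵢ in F, and let [Nᵢ, Nᵢ] be its commutator subgroup. Then for every g ∈ [Nᵢ, Nᵢ], every nonzero monomial of E(g) − 1 contains the variable Xᵢ at least twice. -/

import Mathlib

open Finset in
/-- `IsMagnusExpansion E` says that `E` assigns to each element `g` of the free group on
`n` generators the coefficients `E g w ∈ ℤ` of the non-commutative formal power series
`E(g) ∈ ℤ⟪X₁,…,Xₙ⟫` (a monomial being a word `w : List (Fin n)` in the variables), in such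
a way that `E(1) = 1`, `E` is multiplicative (Cauchy product of power series), and
`E(xᵢ) = 1 + Xᵢ`.  These properties characterize the Magnus expansion uniquely. -/
def IsMagnusExpansion {n : ℕ} (E : FreeGroup (Fin n) → List (Fin n) → ℤ) : Prop :=
  (∀ w : List (Fin n), E 1 w = if w = [] then 1 else 0) ∧
  (∀ g h : FreeGroup (Fin n), ∀ w : List (Fin n),
      E (g * h) w = ∑ k ∈ range (w.length + 1), E g (w.take k) * E h (w.drop k)) ∧
  (∀ i : Fin n, ∀ w : List (Fin n),
      E (FreeGroup.of i) w = if w = [] ∨ w = [i] then 1 else 0)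

namespace MagnusAux

open Finset

variable {n : ℕ} {E : FreeGroup (Fin n) → List (Fin n) → ℤ}

lemma mul_apply (hE : IsMagnusExpansion E) (g h : FreeGroup (Fin n)) (w : List (Fin n)) :
    E (g * h) w = ∑ k ∈ range (w.length + 1), E g (w.take k) * E h (w.drop k) := hE.2.1 g h w

lemma E_nil (hE : IsMagnusExpansion E) (g : FreeGroup (Fin n)) : E g [] = 1 := by
  have hmulnil : ∀ a b : FreeGroup (Fin n), E (a * b) [] = E a [] * E b [] := by
    intro a b; simpa using hE.2.1 a b []
  induction g using FreeGroup.induction_on with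
  | C1 => simpa using hE.1 []
  | of x => simpa using hE.2.2 x []
  | inv_of x ih =>
      have h := hmulnil (FreeGroup.of x) (FreeGroup.of x)⁻¹
      rw [mul_inv_cancel] at h
      have h1 : E 1 ([] : List (Fin n)) = 1 := by simpa using hE.1 []
      have ih' : E (FreeGroup.of x) [] = 1 := ih
      rw [h1, ih', one_mul] at h
      exact h.symm
  | mul x y ihx ihy => rw [hmulnil, ihx, ihy, one_mul]

lemma conv_left (hE : IsMagnusExpansion E) (a h : FreeGroup (Fin n)) (w : List (Fin n))
    (ha : ∀ u : List (Fin n), u <+: w → E a u = if u = [] then 1 else 0) :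
    E (a * h) w = E h w := by
  rw [mul_apply hE]
  rcases eq_or_ne w [] with rfl | hw
  · simp [ha [] (List.nil_prefix)]
  · rw [Finset.sum_eq_single_of_mem 0 (by simp)]
    · rw [List.take_zero, List.drop_zero, ha [] List.nil_prefix, if_pos rfl, one_mul]
    · intro k hk hk0
      have htake : w.take k ≠ [] := by
        intro hnil
        rcases List.take_eq_nil_iff.mp hnil with h' | h' <;> tauto
      rw [ha (w.take k) (List.take_prefix k w), if_neg htake, zero_mul]

/-- The subgroup of elements `g` such that `E g w = δ(w)` whenever `w.count i ≤ c`. -/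
def S (hE : IsMagnusExpansion E) (i : Fin n) (c : ℕ) : Subgroup (FreeGroup (Fin n)) where
  carrier := {g | ∀ w : List (Fin n), w.count i ≤ c → E g w = if w = [] then 1 else 0}
  one_mem' := fun w _ => hE.1 w
  mul_mem' := by
    intro a b ha hb w hw
    rw [conv_left hE a b w fun u hu => ha u (le_trans (hu.sublist.count_le i) hw)]
    exact hb w hw
  inv_mem' := by
    intro a ha w hw
    have h := conv_left hE a a⁻¹ w fun u hu => ha u (le_trans (hu.sublist.count_le i) hw)
    rw [mul_inv_cancel] at h
    rw [← h]
    exact hE.1 w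

lemma mem_S_iff (hE : IsMagnusExpansion E) (i : Fin n) (c : ℕ) (g : FreeGroup (Fin n)) :
    g ∈ S hE i c ↔ ∀ w : List (Fin n), w.count i ≤ c → E g w = if w = [] then 1 else 0 :=
  Iff.rfl

lemma S_normal (hE : IsMagnusExpansion E) (i : Fin n) (c : ℕ) : (S hE i c).Normal := by
  constructor
  intro a ha h
  rw [mem_S_iff]
  intro w hw
  have key : ∀ v : List (Fin n), v.count i ≤ c → E (a * h⁻¹) v = E h⁻¹ v := fun v hv =>
    conv_left hE a h⁻¹ v fun u hu => ha u (le_trans (hu.sublist.count_le i) hv)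
  rw [mul_assoc, mul_apply hE, Finset.sum_congr rfl fun k hk => by
    rw [key _ (le_trans ((List.drop_sublist k w).count_le i) hw)],
    ← mul_apply hE, mul_inv_cancel]
  exact hE.1 w

lemma of_mem_S (hE : IsMagnusExpansion E) (i : Fin n) : FreeGroup.of i ∈ S hE i 0 := by
  rw [mem_S_iff]
  intro w hw
  rw [hE.2.2 i w]
  have : w ≠ [i] := by
    rintro rfl
    simp at hw
  simp [this]

lemma swap (hE : IsMagnusExpansion E) (i : Fin n) {a b : FreeGroup (Fin n)}
    (ha : a ∈ S hE i 0) (hb : b ∈ S hE i 0)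
    (w : List (Fin n)) (hw : w.count i ≤ 1) :
    E (a * b) w = E a w + E b w - (if w = [] then 1 else 0) := by
  rw [mem_S_iff] at ha hb
  rcases Nat.le_one_iff_eq_zero_or_eq_one.mp hw with hc | hc
  · have h1 : E (a * b) w = E b w :=
      conv_left hE a b w fun u hu => ha u (by
        have := hu.sublist.count_le i
        omega)
    rw [h1, ha w (le_of_eq hc), hb w (le_of_eq hc)]
    ring
  · have hne : w ≠ [] := by rintro rfl; simp at hc
    have hlen : w.length ≠ 0 := by simpa using hne
    rw [mul_apply hE]
    have hterm : ∀ k ∈ range (w.length + 1),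
        E a (w.take k) * E b (w.drop k)
          = (if k = 0 then E b w else 0) + (if k = w.length then E a w else 0) := by
      intro k hk
      rw [Finset.mem_range] at hk
      rcases eq_or_ne k 0 with rfl | hk0
      · rw [if_pos rfl, if_neg (Ne.symm hlen)]
        simp [E_nil hE]
      rcases eq_or_ne k w.length with rfl | hkl
      · rw [if_neg hk0, if_pos rfl, List.take_length, List.drop_length, E_nil hE]
        ring
      · have hkl' : k < w.length := by omega
        have htake : w.take k ≠ [] := by
          intro hnil
          rcases List.take_eq_nil_iff.mp hnil with h' | h' <;> tauto
        have hdrop : w.drop k ≠ [] := by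
          intro hnil
          have := List.drop_eq_nil_iff.mp hnil
          omega
        have hsum : (w.take k).count i + (w.drop k).count i = 1 := by
          rw [← List.count_append, List.take_append_drop]; exact hc
        rw [if_neg hk0, if_neg hkl]
        rcases Nat.eq_zero_or_pos ((w.take k).count i) with h0 | hpos
        · rw [ha (w.take k) (le_of_eq h0), if_neg htake, zero_mul, add_zero]
        · have h0 : (w.drop k).count i = 0 := by omega
          rw [hb (w.drop k) (le_of_eq h0), if_neg hdrop, mul_zero, add_zero]
    rw [Finset.sum_congr rfl hterm, Finset.sum_add_distrib,
      Finset.sum_ite_eq' (range (w.length + 1)) 0 (fun _ => E b w),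
      Finset.sum_ite_eq' (range (w.length + 1)) w.length (fun _ => E a w),
      if_pos (by simp), if_pos (by simp), if_neg hne]
    ring

open scoped commutatorElement in
lemma comm_mem (hE : IsMagnusExpansion E) (i : Fin n) {a b : FreeGroup (Fin n)}
    (ha : a ∈ S hE i 0) (hb : b ∈ S hE i 0) : ⁅a, b⁆ ∈ S hE i 1 := by
  have hdecomp : a * b = ⁅a, b⁆ * (b * a) := by
    rw [commutatorElement_def]; group
  rw [mem_S_iff]
  suffices H : ∀ m : ℕ, ∀ w : List (Fin n), w.length ≤ m → w.count i ≤ 1 →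
      E ⁅a, b⁆ w = if w = [] then 1 else 0 by
    intro w hw; exact H w.length w le_rfl hw
  intro m
  induction m with
  | zero =>
      intro w hl _
      have : w = [] := List.length_eq_zero_iff.mp (Nat.le_zero.mp hl)
      subst this
      simp [E_nil hE]
  | succ m ih =>
      intro w hl hw
      rcases eq_or_ne w [] with rfl | hne
      · simp [E_nil hE]
      · have hlen : w.length ≠ 0 := by simpa using hne
        have expand : E (a * b) w
            = ∑ k ∈ range (w.length + 1), E ⁅a, b⁆ (w.take k) * E (b * a) (w.drop k) := by
          rw [hdecomp]; exact mul_apply hE _ _ w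
        have hterm : ∀ k ∈ range (w.length + 1),
            E ⁅a, b⁆ (w.take k) * E (b * a) (w.drop k)
              = (if k = 0 then E (b * a) w else 0)
                + (if k = w.length then E ⁅a, b⁆ w else 0) := by
          intro k hk
          rw [Finset.mem_range] at hk
          rcases eq_or_ne k 0 with rfl | hk0
          · rw [if_pos rfl, if_neg (Ne.symm hlen)]
            have : E ⁅a, b⁆ ([] : List (Fin n)) = 1 := E_nil hE _
            simp [this]
          rcases eq_or_ne k w.length with rfl | hkl
          · rw [if_neg hk0, if_pos rfl, List.take_length, List.drop_length, E_nil hE]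
            ring
          · have hkl' : k < w.length := by omega
            have htake : w.take k ≠ [] := by
              intro hnil
              rcases List.take_eq_nil_iff.mp hnil with h' | h' <;> tauto
            have hlt : (w.take k).length ≤ m := by
              rw [List.length_take]; omega
            have hct : (w.take k).count i ≤ 1 :=
              le_trans ((List.take_sublist k w).count_le i) hw
            rw [ih (w.take k) hlt hct, if_neg htake, zero_mul, if_neg hk0, if_neg hkl,
              add_zero]
        have hnil : E ⁅a, b⁆ ([] : List (Fin n)) = 1 := E_nil hE _
        rw [Finset.sum_congr rfl hterm, Finset.sum_add_distrib,
          Finset.sum_ite_eq' (range (w.length + 1)) 0 (fun _ => E (b * a) w),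
          Finset.sum_ite_eq' (range (w.length + 1)) w.length (fun _ => E ⁅a, b⁆ w),
          if_pos (by simp), if_pos (by simp)] at expand
        have h1 := swap hE i ha hb w hw
        have h2 := swap hE i hb ha w hw
        rw [if_neg hne]
        rw [h1, h2] at expand
        linarith

end MagnusAux

/-- If `g` lies in the commutator subgroup `[Nᵢ, Nᵢ]` of the normal closure of the
generator `xᵢ`, then every nonzero monomial of `E(g) - 1` contains `Xᵢ` at least twice. -/
theorem magnus_commutator_normalClosure {n : ℕ} (E : FreeGroup (Fin n) → List (Fin n) → ℤ)
    (hE : IsMagnusExpansion E) (i : Fin n)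
    (g : FreeGroup (Fin n))
    (hg : g ∈ ⁅Subgroup.normalClosure {FreeGroup.of i},
               Subgroup.normalClosure {FreeGroup.of i}⁆) :
    ∀ w : List (Fin n), w.count i ≤ 1 → E g w = if w = [] then 1 else 0 := by
  have hN : Subgroup.normalClosure {FreeGroup.of i} ≤ MagnusAux.S hE i 0 := by
    haveI := MagnusAux.S_normal hE i 0
    apply Subgroup.normalClosure_le_normal
    rintro x hx
    rw [Set.mem_singleton_iff] at hx
    subst hx
    exact MagnusAux.of_mem_S hE i
  have hT : ⁅Subgroup.normalClosure {FreeGroup.of i},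
      Subgroup.normalClosure {FreeGroup.of i}⁆ ≤ MagnusAux.S hE i 1 := by
    rw [Subgroup.commutator_le]
    intro a ha b hb
    exact MagnusAux.comm_mem hE i (hN ha) (hN hb)
  exact (MagnusAux.mem_S_iff hE i 1 g).mp (hT hg)
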